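/- Let p be a prime, and in the Heisenberg pro-p group of 3×3 upper unitriangular matrices over ℤ_p let x = I + E₁₂ and y = I + E₂₃. Then the closure H of the subgroup generated by x and y^p equals the set { I + aE₁₂ + pbE₂₃ + pcE₁₃ : a, b, c ∈ ℤ_p }. -/

import Mathlib

open Matrix

variable (p : ℕ) [Fact p.Prime]

/-- `3 × 3` matrices over `ℤ_p`. -/
abbrev Mat3 (p : ℕ) [Fact p.Prime] := Matrix (Fin 3) (Fin 3) ℤ_[p]

/-- Elementary transvection `I + c · Eᵢⱼ` (for `i ≠ j`), as a unit of the matrix ring,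
i.e. as an element of `GL₃(ℤ_p)`. -/
noncomputable def transvection3 (i j : Fin 3) (hij : i ≠ j) (c : ℤ_[p]) : (Mat3 p)ˣ where
  val := 1 + single i j c
  inv := 1 - single i j c
  val_inv := by
    have h : single i j c * single i j c = (0 : Mat3 p) :=
      Matrix.single_mul_single_of_ne c i j i hij.symm c
    have : (1 + single i j c) * (1 - single i j c)
        = 1 - single i j c * single i j c := by noncomm_ring
    rw [this, h, sub_zero]
  inv_val := by
    have h : single i j c * single i j c = (0 : Mat3 p) :=
      Matrix.single_mul_single_of_ne c i j i hij.symm c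
    have : (1 - single i j c) * (1 + single i j c)
        = 1 - single i j c * single i j c := by noncomm_ring
    rw [this, h, sub_zero]

/-- The Heisenberg pro-`p` group: the subgroup of `GL₃(ℤ_p)` of upper unitriangular
matrices. -/
def heisenberg : Subgroup (Mat3 p)ˣ where
  carrier := {M | (M : Mat3 p) 0 0 = 1 ∧ (M : Mat3 p) 1 1 = 1 ∧ (M : Mat3 p) 2 2 = 1 ∧
    (M : Mat3 p) 1 0 = 0 ∧ (M : Mat3 p) 2 0 = 0 ∧ (M : Mat3 p) 2 1 = 0}
  one_mem' := by
    refine ⟨?_, ?_, ?_, ?_, ?_, ?_⟩ <;> simp [Matrix.one_apply]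
  mul_mem' := by
    rintro a b ⟨a1, a2, a3, a4, a5, a6⟩ ⟨b1, b2, b3, b4, b5, b6⟩
    refine ⟨?_, ?_, ?_, ?_, ?_, ?_⟩ <;>
      simp [Units.val_mul, Matrix.mul_apply, Fin.sum_univ_three, a1, a2, a3, a4, a5, a6,
        b1, b2, b3, b4, b5, b6]
  inv_mem' := by
    rintro a ⟨a1, a2, a3, a4, a5, a6⟩
    have hNM : (↑a⁻¹ : Mat3 p) * (a : Mat3 p) = 1 := by
      rw [← Units.val_mul, inv_mul_cancel, Units.val_one]
    set N : Mat3 p := (↑a⁻¹ : Mat3 p) with hN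
    have e : ∀ i j : Fin 3, (N * (a : Mat3 p)) i j = (1 : Mat3 p) i j := by
      intro i j; rw [hNM]
    have e10 := e 1 0
    have e20 := e 2 0
    have e21 := e 2 1
    have e00 := e 0 0
    have e11 := e 1 1
    have e22 := e 2 2
    simp [Matrix.mul_apply, Fin.sum_univ_three, a1, a2, a3, a4, a5, a6,
      Matrix.one_apply] at e10 e20 e21 e00 e11 e22
    have h10 : N 1 0 = 0 := e10
    have h20 : N 2 0 = 0 := e20
    have h21 : N 2 1 = 0 := by
      rw [h20] at e21; simpa using e21
    have h00 : N 0 0 = 1 := e00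
    have h11 : N 1 1 = 1 := by
      rw [h10] at e11; simpa using e11
    have h22 : N 2 2 = 1 := by
      rw [h20, h21] at e22; simpa using e22
    exact ⟨h00, h11, h22, h10, h20, h21⟩

/-- `x = I + E₁₂`. -/
noncomputable def xH : ↥(heisenberg p) :=
  ⟨transvection3 p 0 1 (by decide) 1, by
    refine ⟨?_, ?_, ?_, ?_, ?_, ?_⟩ <;>
      simp [transvection3, Matrix.one_apply, Matrix.single]⟩

/-- `y = I + E₂₃`. -/
noncomputable def yH : ↥(heisenberg p) :=
  ⟨transvection3 p 1 2 (by decide) 1, by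
    refine ⟨?_, ?_, ?_, ?_, ?_, ?_⟩ <;>
      simp [transvection3, Matrix.one_apply, Matrix.single]⟩

/-- `z = I + E₁₃`. -/
noncomputable def zH : ↥(heisenberg p) :=
  ⟨transvection3 p 0 2 (by decide) 1, by
    refine ⟨?_, ?_, ?_, ?_, ?_, ?_⟩ <;>
      simp [transvection3, Matrix.one_apply, Matrix.single]⟩


/-! ### Auxiliary machinery -/

noncomputable def Uu (a b c : ℤ_[p]) : (Mat3 p)ˣ where
  val := 1 + single 0 1 a + single 1 2 b + single 0 2 c
  inv := 1 + single 0 1 (-a) + single 1 2 (-b) + single 0 2 (a*b-c)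
  val_inv := by
    ext i j
    fin_cases i <;> fin_cases j <;>
      simp [mul_apply, Fin.sum_univ_three, single, one_apply] <;> ring
  inv_val := by
    ext i j
    fin_cases i <;> fin_cases j <;>
      simp [mul_apply, Fin.sum_univ_three, single, one_apply] <;> ring

lemma Uu_mul (a b c a' b' c' : ℤ_[p]) :
    Uu p a b c * Uu p a' b' c' = Uu p (a+a') (b+b') (c+c'+a*b') := by
  apply Units.ext
  show ((Uu p a b c : Mat3 p) * (Uu p a' b' c' : Mat3 p)) = _
  ext i j
  fin_cases i <;> fin_cases j <;>
    simp [Uu, mul_apply, Fin.sum_univ_three, single, one_apply] <;> ring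

lemma Uu_zero : Uu p 0 0 0 = 1 := by
  apply Units.ext
  show (1 + _ + _ + _ : Mat3 p) = 1
  simp

lemma Uu_inv (a b c : ℤ_[p]) : (Uu p a b c)⁻¹ = Uu p (-a) (-b) (a*b-c) := by
  refine inv_eq_of_mul_eq_one_right ?_
  rw [Uu_mul]
  rw [show a + -a = 0 by ring, show b + -b = 0 by ring,
    show c + (a*b-c) + a * -b = 0 by ring, Uu_zero]

lemma Uu_a_pow (a : ℤ_[p]) (n : ℕ) : (Uu p a 0 0) ^ n = Uu p ((n:ℤ_[p])*a) 0 0 := by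
  induction n with
  | zero => simp [Uu_zero]
  | succ n ih =>
    rw [pow_succ, ih, Uu_mul]
    rw [show (n:ℤ_[p])*a + a = ((n+1 : ℕ):ℤ_[p])*a by push_cast; ring]
    norm_num

lemma Uu_b_pow (b : ℤ_[p]) (n : ℕ) : (Uu p 0 b 0) ^ n = Uu p 0 ((n:ℤ_[p])*b) 0 := by
  induction n with
  | zero => simp [Uu_zero]
  | succ n ih =>
    rw [pow_succ, ih, Uu_mul]
    rw [show (n:ℤ_[p])*b + b = ((n+1 : ℕ):ℤ_[p])*b by push_cast; ring]
    norm_num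

lemma Uu_c_pow (c : ℤ_[p]) (n : ℕ) : (Uu p 0 0 c) ^ n = Uu p 0 0 ((n:ℤ_[p])*c) := by
  induction n with
  | zero => simp [Uu_zero]
  | succ n ih =>
    rw [pow_succ, ih, Uu_mul]
    rw [show (n:ℤ_[p])*c + c + 0*0 = ((n+1 : ℕ):ℤ_[p])*c by push_cast; ring]
    norm_num

lemma Uu_a_zpow (a : ℤ_[p]) (n : ℤ) : (Uu p a 0 0) ^ n = Uu p ((n:ℤ_[p])*a) 0 0 := by
  cases n with
  | ofNat m => rw [Int.ofNat_eq_coe, zpow_natCast, Uu_a_pow]; norm_num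
  | negSucc m =>
    rw [zpow_negSucc, Uu_a_pow, Uu_inv]
    congr 1 <;> push_cast [Int.negSucc_eq] <;> ring

lemma Uu_b_zpow (b : ℤ_[p]) (n : ℤ) : (Uu p 0 b 0) ^ n = Uu p 0 ((n:ℤ_[p])*b) 0 := by
  cases n with
  | ofNat m => rw [Int.ofNat_eq_coe, zpow_natCast, Uu_b_pow]; norm_num
  | negSucc m =>
    rw [zpow_negSucc, Uu_b_pow, Uu_inv]
    congr 1 <;> push_cast [Int.negSucc_eq] <;> ring

lemma Uu_c_zpow (c : ℤ_[p]) (n : ℤ) : (Uu p 0 0 c) ^ n = Uu p 0 0 ((n:ℤ_[p])*c) := by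
  cases n with
  | ofNat m => rw [Int.ofNat_eq_coe, zpow_natCast, Uu_c_pow]; norm_num
  | negSucc m =>
    rw [zpow_negSucc, Uu_c_pow, Uu_inv]
    congr 1 <;> push_cast [Int.negSucc_eq] <;> ring

lemma Uu_mem_heisenberg (a b c : ℤ_[p]) : Uu p a b c ∈ heisenberg p := by
  refine ⟨?_, ?_, ?_, ?_, ?_, ?_⟩ <;>
    simp [Uu, single, Matrix.one_apply]

noncomputable def UuH (a b c : ℤ_[p]) : ↥(heisenberg p) :=
  ⟨Uu p a b c, Uu_mem_heisenberg p a b c⟩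

lemma UuH_mul (a b c a' b' c' : ℤ_[p]) :
    UuH p a b c * UuH p a' b' c' = UuH p (a+a') (b+b') (c+c'+a*b') :=
  Subtype.ext (Uu_mul p a b c a' b' c')

lemma UuH_zero : UuH p 0 0 0 = 1 := Subtype.ext (Uu_zero p)

lemma UuH_inv (a b c : ℤ_[p]) : (UuH p a b c)⁻¹ = UuH p (-a) (-b) (a*b-c) :=
  Subtype.ext (Uu_inv p a b c)

lemma UuH_a_zpow (a : ℤ_[p]) (n : ℤ) : (UuH p a 0 0) ^ n = UuH p ((n:ℤ_[p])*a) 0 0 :=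
  Subtype.ext (Uu_a_zpow p a n)

lemma UuH_b_zpow (b : ℤ_[p]) (n : ℤ) : (UuH p 0 b 0) ^ n = UuH p 0 ((n:ℤ_[p])*b) 0 :=
  Subtype.ext (Uu_b_zpow p b n)

lemma UuH_c_zpow (c : ℤ_[p]) (n : ℤ) : (UuH p 0 0 c) ^ n = UuH p 0 0 ((n:ℤ_[p])*c) :=
  Subtype.ext (Uu_c_zpow p c n)

lemma xH_eq : xH p = UuH p 1 0 0 := by
  apply Subtype.ext; apply Units.ext
  show (1 + _ : Mat3 p) = 1 + _ + _ + _
  simp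

lemma yH_eq : yH p = UuH p 0 1 0 := by
  apply Subtype.ext; apply Units.ext
  show (1 + _ : Mat3 p) = 1 + _ + _ + _
  simp

lemma yH_pow : (yH p) ^ p = UuH p 0 (p:ℤ_[p]) 0 := by
  rw [yH_eq, ← zpow_natCast, UuH_b_zpow]
  norm_num

/-- The commutator element `w = [x, y^p] = I + p·E₁₃`. -/
noncomputable def wH : ↥(heisenberg p) := xH p * (yH p)^p * (xH p)⁻¹ * ((yH p)^p)⁻¹

lemma wH_eq : wH p = UuH p 0 0 (p:ℤ_[p]) := by
  rw [wH, xH_eq, yH_pow, UuH_inv, UuH_inv, UuH_mul, UuH_mul, UuH_mul]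
  norm_num

lemma wH_mem : wH p ∈ Subgroup.closure {xH p, (yH p) ^ p} := by
  have hx : xH p ∈ Subgroup.closure {xH p, (yH p) ^ p} :=
    Subgroup.subset_closure (Set.mem_insert _ _)
  have hy : (yH p) ^ p ∈ Subgroup.closure {xH p, (yH p) ^ p} :=
    Subgroup.subset_closure (Set.mem_insert_of_mem _ rfl)
  exact mul_mem (mul_mem (mul_mem hx hy) (inv_mem hx)) (inv_mem hy)

lemma int_elts_mem (A B C : ℤ) :
    UuH p (A:ℤ_[p]) ((p:ℤ_[p])*(B:ℤ_[p])) ((p:ℤ_[p])*(C:ℤ_[p]))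
      ∈ Subgroup.closure {xH p, (yH p) ^ p} := by
  have hx : xH p ∈ Subgroup.closure {xH p, (yH p) ^ p} :=
    Subgroup.subset_closure (Set.mem_insert _ _)
  have hy : (yH p) ^ p ∈ Subgroup.closure {xH p, (yH p) ^ p} :=
    Subgroup.subset_closure (Set.mem_insert_of_mem _ rfl)
  have key : ((yH p)^p) ^ B * (xH p) ^ A * (wH p) ^ C
      = UuH p (A:ℤ_[p]) ((p:ℤ_[p])*(B:ℤ_[p])) ((p:ℤ_[p])*(C:ℤ_[p])) := by
    rw [yH_pow, xH_eq, wH_eq, UuH_b_zpow, UuH_a_zpow, UuH_c_zpow, UuH_mul, UuH_mul]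
    norm_num
    congr 1 <;> ring
  rw [← key]
  exact mul_mem (mul_mem (zpow_mem hy B) (zpow_mem hx A)) (zpow_mem (wH_mem p) C)

/-- The target set as a subgroup. -/
noncomputable def SH : Subgroup ↥(heisenberg p) where
  carrier := {M | ∃ a b c : ℤ_[p], M = UuH p a ((p:ℤ_[p])*b) ((p:ℤ_[p])*c)}
  one_mem' := ⟨0, 0, 0, by rw [mul_zero, ← UuH_zero]⟩
  mul_mem' := by
    rintro M N ⟨a, b, c, rfl⟩ ⟨a', b', c', rfl⟩
    refine ⟨a + a', b + b', c + c' + a * b', ?_⟩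
    rw [UuH_mul]
    congr 1 <;> ring
  inv_mem' := by
    rintro M ⟨a, b, c, rfl⟩
    refine ⟨-a, -b, a * b - c, ?_⟩
    rw [UuH_inv]
    congr 1 <;> ring

lemma mem_SH_iff (M : ↥(heisenberg p)) :
    M ∈ SH p ↔ ∃ a b c : ℤ_[p],
      ((M : (Mat3 p)ˣ) : Mat3 p) =
        1 + single 0 1 a + single 1 2 ((p : ℤ_[p]) * b) +
          single 0 2 ((p : ℤ_[p]) * c) := by
  constructor
  · rintro ⟨a, b, c, rfl⟩
    exact ⟨a, b, c, rfl⟩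
  · rintro ⟨a, b, c, h⟩
    exact ⟨a, b, c, Subtype.ext (Units.ext h)⟩

lemma dvd_closed : IsClosed {x : ℤ_[p] | (p : ℤ_[p]) ∣ x} := by
  have h : {x : ℤ_[p] | (p : ℤ_[p]) ∣ x} = {x : ℤ_[p] | ‖x‖ ≤ (p : ℝ) ^ (-(1:ℕ) : ℤ)} := by
    ext x
    rw [Set.mem_setOf_eq, Set.mem_setOf_eq, PadicInt.norm_le_pow_iff_mem_span_pow,
      Ideal.mem_span_singleton, pow_one]
  rw [h]
  exact isClosed_le continuous_norm continuous_const

lemma ev_continuous (i j : Fin 3) :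
    Continuous fun M : ↥(heisenberg p) => ((M : (Mat3 p)ˣ) : Mat3 p) i j := by
  have h : Continuous fun M : ↥(heisenberg p) => ((M : (Mat3 p)ˣ) : Mat3 p) :=
    Units.continuous_val.comp continuous_subtype_val
  exact ((continuous_apply j).comp (continuous_apply i)).comp h

lemma SH_closed : IsClosed ((SH p : Set ↥(heisenberg p))) := by
  have hset : (SH p : Set ↥(heisenberg p)) =
      {M : ↥(heisenberg p) | (p : ℤ_[p]) ∣ ((M : (Mat3 p)ˣ) : Mat3 p) 1 2} ∩
      {M : ↥(heisenberg p) | (p : ℤ_[p]) ∣ ((M : (Mat3 p)ˣ) : Mat3 p) 0 2} := by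
    ext M
    rw [SetLike.mem_coe, mem_SH_iff]
    constructor
    · rintro ⟨a, b, c, h⟩
      constructor
      · refine ⟨b, ?_⟩
        rw [h]
        simp [single, Matrix.one_apply]
      · refine ⟨c, ?_⟩
        rw [h]
        simp [single, Matrix.one_apply]
    · rintro ⟨⟨b, hb⟩, ⟨c, hc⟩⟩
      obtain ⟨h00, h11, h22, h10, h20, h21⟩ := M.2
      refine ⟨((M : (Mat3 p)ˣ) : Mat3 p) 0 1, b, c, ?_⟩
      ext i j
      fin_cases i <;> fin_cases j <;>
        simp [single, Matrix.one_apply, h00, h11, h22, h10, h20, h21, ← hb, ← hc]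
  rw [hset]
  exact ((dvd_closed p).preimage (ev_continuous p 1 2)).inter
    ((dvd_closed p).preimage (ev_continuous p 0 2))

lemma continuous_sbm {X : Type*} [TopologicalSpace X] (i j : Fin 3) {g : X → ℤ_[p]}
    (hg : Continuous g) : Continuous fun t => (single i j (g t) : Mat3 p) := by
  have h : (fun t => (single i j (g t) : Mat3 p))
      = fun t => g t • (single i j (1 : ℤ_[p]) : Mat3 p) := by
    funext t
    rw [smul_single, smul_eq_mul, mul_one]
  rw [h]
  exact hg.smul continuous_const

noncomputable def phiH : ℤ_[p] × ℤ_[p] × ℤ_[p] → ↥(heisenberg p) :=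
  fun t => UuH p t.1 ((p:ℤ_[p]) * t.2.1) ((p:ℤ_[p]) * t.2.2)

lemma phiH_continuous : Continuous (phiH p) := by
  apply Continuous.subtype_mk
  rw [Units.continuous_iff]
  constructor
  · show Continuous fun t : ℤ_[p] × ℤ_[p] × ℤ_[p] =>
      (1 + single 0 1 t.1 + single 1 2 ((p:ℤ_[p]) * t.2.1) +
        single 0 2 ((p:ℤ_[p]) * t.2.2) : Mat3 p)
    refine ((continuous_const.add ?_).add ?_).add ?_
    · exact continuous_sbm p 0 1 continuous_fst
    · exact continuous_sbm p 1 2 (continuous_const.mul (continuous_fst.comp continuous_snd))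
    · exact continuous_sbm p 0 2 (continuous_const.mul (continuous_snd.comp continuous_snd))
  · show Continuous fun t : ℤ_[p] × ℤ_[p] × ℤ_[p] =>
      (1 + single 0 1 (-t.1) + single 1 2 (-((p:ℤ_[p]) * t.2.1)) +
        single 0 2 (t.1 * ((p:ℤ_[p]) * t.2.1) - (p:ℤ_[p]) * t.2.2) : Mat3 p)
    refine ((continuous_const.add ?_).add ?_).add ?_
    · exact continuous_sbm p 0 1 continuous_fst.neg
    · exact continuous_sbm p 1 2
        (continuous_const.mul (continuous_fst.comp continuous_snd)).neg
    · exact continuous_sbm p 0 2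
        ((continuous_fst.mul (continuous_const.mul (continuous_fst.comp continuous_snd))).sub
          (continuous_const.mul (continuous_snd.comp continuous_snd)))
/-- In the Heisenberg pro-`p` group, the closure `H` of the subgroup
generated by `x = I + E₁₂` and `y ^ p` (`y = I + E₂₃`) equals the set
`{ I + a·E₁₂ + p·b·E₂₃ + p·c·E₁₃ : a, b, c ∈ ℤ_p }`. -/
theorem closure_x_yp_eq :
    ((Subgroup.closure {xH p, (yH p) ^ p}).topologicalClosure :
        Set ↥(heisenberg p)) =
      {M : ↥(heisenberg p) | ∃ a b c : ℤ_[p],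
        ((M : (Mat3 p)ˣ) : Mat3 p) =
          1 + single 0 1 a + single 1 2 ((p : ℤ_[p]) * b) +
            single 0 2 ((p : ℤ_[p]) * c)} := by
  apply Set.Subset.antisymm
  · -- topological closure ⊆ target set
    have hsub : (Subgroup.closure {xH p, (yH p) ^ p} : Set ↥(heisenberg p))
        ⊆ (SH p : Set ↥(heisenberg p)) := by
      refine (Subgroup.closure_le (SH p)).2 ?_
      rintro g (rfl | rfl)
      · exact ⟨1, 0, 0, by rw [xH_eq]; norm_num⟩
      · exact ⟨0, 1, 0, by rw [yH_pow]; norm_num⟩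
    have h1 : ((Subgroup.closure {xH p, (yH p) ^ p}).topologicalClosure :
        Set ↥(heisenberg p)) ⊆ (SH p : Set ↥(heisenberg p)) := by
      rw [Subgroup.topologicalClosure_coe]
      exact closure_minimal hsub (SH_closed p)
    intro M hM
    exact (mem_SH_iff p M).1 (h1 hM)
  · -- target set ⊆ topological closure
    intro M hM
    obtain ⟨a, b, c, h⟩ := hM
    have hM' : M = phiH p (a, b, c) := Subtype.ext (Units.ext h)
    have hdense : DenseRange (fun n : ℤ × ℤ × ℤ =>
        ((n.1 : ℤ_[p]), (n.2.1 : ℤ_[p]), (n.2.2 : ℤ_[p]))) := by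
      exact PadicInt.denseRange_intCast.prodMap
        (PadicInt.denseRange_intCast.prodMap PadicInt.denseRange_intCast)
    have hmem : (a, b, c) ∈ closure (Set.range fun n : ℤ × ℤ × ℤ =>
        ((n.1 : ℤ_[p]), (n.2.1 : ℤ_[p]), (n.2.2 : ℤ_[p]))) := hdense _
    have himg : phiH p (a, b, c) ∈
        closure (phiH p '' Set.range fun n : ℤ × ℤ × ℤ =>
          ((n.1 : ℤ_[p]), (n.2.1 : ℤ_[p]), (n.2.2 : ℤ_[p]))) :=
      (image_closure_subset_closure_image (phiH_continuous p))
        (Set.mem_image_of_mem _ hmem)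
    have hsub2 : (phiH p '' Set.range fun n : ℤ × ℤ × ℤ =>
          ((n.1 : ℤ_[p]), (n.2.1 : ℤ_[p]), (n.2.2 : ℤ_[p])))
        ⊆ (Subgroup.closure {xH p, (yH p) ^ p} : Set ↥(heisenberg p)) := by
      rintro g ⟨t, ⟨⟨A, B, C⟩, rfl⟩, rfl⟩
      exact int_elts_mem p A B C
    rw [hM', Subgroup.topologicalClosure_coe]
    exact closure_mono hsub2 himg
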